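/- Let r^1,...,r^k ∈ Z^n be linearly independent, L = span{r^1,...,r^k}, and M = (r^i)^⊥. Then the orthogonal projection of par{r^1,...,r^k} onto M equals the set of lattice points of (L ∩ Z^n)|M lying in the half-open parallelepiped {Σ_{j≠i} λ_j (r^j|M) : λ_j ∈ [0,1)}. -/
import Mathlib


open scoped BigOperators

noncomputable section

namespace ICRPaper

/-- A real vector is integral if every coordinate is an integer. -/
def IsIntegral {n : ℕ} (x : Fin n → ℝ) : Prop := ∀ i, ∃ z : ℤ, x i = (z : ℝ)

/-- The lattice of integer points of `ℝ^n`. -/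
def intLattice (n : ℕ) : Set (Fin n → ℝ) := {x | IsIntegral x}

/-- Standard dot product on `ℝ^n`. -/
def dot {n : ℕ} (x y : Fin n → ℝ) : ℝ := ∑ i, x i * y i

/-- `pos r`: the cone of non-negative real combinations of the vectors `r i`. -/
def pos {n : ℕ} {ι : Type} [Fintype ι] (r : ι → (Fin n → ℝ)) : Set (Fin n → ℝ) :=
  {x | ∃ lam : ι → ℝ, (∀ i, 0 ≤ lam i) ∧ x = ∑ i, lam i • r i}

/-- Lattice points (w.r.t. a lattice `Λ`) in the half-open parallelepiped spanned by `r`. -/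
def parL {n : ℕ} {ι : Type} [Fintype ι] (Λ : Set (Fin n → ℝ)) (r : ι → (Fin n → ℝ)) :
    Set (Fin n → ℝ) :=
  {x | (∃ lam : ι → ℝ, (∀ i, 0 ≤ lam i ∧ lam i < 1) ∧ x = ∑ i, lam i • r i) ∧ x ∈ Λ}

/-- Integer points in the half-open parallelepiped spanned by `r`. -/
def par {n : ℕ} {ι : Type} [Fintype ι] (r : ι → (Fin n → ℝ)) : Set (Fin n → ℝ) :=
  parL (intLattice n) r

/-- `h` is a Hilbert basis element of the cone `C` with respect to the lattice `Λ`: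
a nonzero lattice vector of `C` which is not the sum of two nonzero lattice vectors of `C`. -/
def IsHilbertL {n : ℕ} (Λ : Set (Fin n → ℝ)) (C : Set (Fin n → ℝ)) (h : Fin n → ℝ) : Prop :=
  h ∈ C ∧ h ∈ Λ ∧ h ≠ 0 ∧
    ∀ a b : Fin n → ℝ, a ∈ C → b ∈ C → a ∈ Λ → b ∈ Λ → a ≠ 0 → b ≠ 0 → h ≠ a + b

/-- The integer Carathéodory rank of `C` with respect to the lattice `Λ`:
the maximum over lattice points `z ∈ C` of the minimal number of Hilbert basis
elements needed to write `z` as a non-negative integral combination. -/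
def ICRL {n : ℕ} (Λ : Set (Fin n → ℝ)) (C : Set (Fin n → ℝ)) : ℕ :=
  sSup {m : ℕ | ∃ z ∈ C, z ∈ Λ ∧
    m = sInf {k : ℕ | ∃ h : Fin k → (Fin n → ℝ), ∃ c : Fin k → ℕ,
      (∀ i, IsHilbertL Λ C (h i)) ∧ z = ∑ i, (c i : ℝ) • h i}}

/-- The integer Carathéodory rank with respect to the integer lattice `ℤ^n`. -/
def ICR {n : ℕ} (C : Set (Fin n → ℝ)) : ℕ := ICRL (intLattice n) C

/-- The lattice `L ∩ ℤ^n`, where `L` is the real span of the vectors `r i`. -/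
def latticeOf {n : ℕ} {ι : Type} [Fintype ι] (r : ι → (Fin n → ℝ)) : Set (Fin n → ℝ) :=
  {x | x ∈ Submodule.span ℝ (Set.range r) ∧ IsIntegral x}

/-- The dual lattice `Λ* = {x ∈ lin Λ : ⟨y, x⟩ ∈ ℤ for all y ∈ Λ}`. -/
def dualLattice {n : ℕ} (Λ : Set (Fin n → ℝ)) : Set (Fin n → ℝ) :=
  {x | x ∈ Submodule.span ℝ Λ ∧ ∀ y ∈ Λ, ∃ m : ℤ, dot y x = (m : ℝ)}

/-- Orthogonal projection onto the orthogonal complement of `v`. -/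
def projPerp {n : ℕ} (v : Fin n → ℝ) (x : Fin n → ℝ) : Fin n → ℝ :=
  x - (dot x v / dot v v) • v

lemma dot_self_pos {n : ℕ} {v : Fin n → ℝ} (hv : v ≠ 0) : 0 < dot v v := by
  obtain ⟨j, hj⟩ : ∃ j, v j ≠ 0 := by
    by_contra h; push_neg at h; exact hv (funext h)
  exact Finset.sum_pos' (fun i _ => mul_self_nonneg _) ⟨j, Finset.mem_univ j, mul_self_pos.2 hj⟩

lemma dot_add_left {n : ℕ} (a b v : Fin n → ℝ) : dot (a + b) v = dot a v + dot b v := by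
  simp [dot, add_mul, Finset.sum_add_distrib]

lemma dot_smul_left {n : ℕ} (c : ℝ) (a v : Fin n → ℝ) : dot (c • a) v = c * dot a v := by
  simp [dot, Finset.mul_sum, mul_assoc]

def projPerpLM {n : ℕ} (v : Fin n → ℝ) : (Fin n → ℝ) →ₗ[ℝ] (Fin n → ℝ) where
  toFun := projPerp v
  map_add' a b := by
    funext c
    simp only [projPerp, dot_add_left, Pi.add_apply, Pi.sub_apply, Pi.smul_apply, smul_eq_mul]
    ring
  map_smul' t a := by
    funext c
    simp only [projPerp, dot_smul_left, RingHom.id_apply, Pi.smul_apply, Pi.sub_apply,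
      smul_eq_mul]
    ring

@[simp] lemma projPerpLM_apply {n : ℕ} (v x : Fin n → ℝ) : projPerpLM v x = projPerp v x := rfl

lemma projPerp_self {n : ℕ} {v : Fin n → ℝ} (hv : v ≠ 0) : projPerp v v = 0 := by
  simp [projPerp, div_self (dot_self_pos hv).ne']

lemma projPerp_kernel {n : ℕ} {v x : Fin n → ℝ} (hx : projPerp v x = 0) :
    ∃ t : ℝ, x = t • v :=
  ⟨dot x v / dot v v, sub_eq_zero.mp hx⟩

lemma projPerp_sum_smul {n : ℕ} {ι : Type} [Fintype ι] (v : Fin n → ℝ)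
    (f : ι → (Fin n → ℝ)) (c : ι → ℝ) :
    projPerp v (∑ j, c j • f j) = ∑ j, c j • projPerp v (f j) := by
  have h := map_sum (projPerpLM v) (fun j => c j • f j) Finset.univ
  simp only [projPerpLM_apply, map_smul] at h
  exact h

lemma sum_subtype_ne {k : ℕ} {V : Type*} [AddCommMonoid V] (i : Fin k) (f : Fin k → V) :
    ∑ j : {j : Fin k // j ≠ i}, f (j : Fin k) = ∑ j ∈ Finset.univ.erase i, f j :=
  (Finset.sum_subtype _ (fun x => by simp) f).symm

/-- the orthogonal projection of `par r` onto `(r^i)^⊥` equals the set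
of points of the projected lattice `(L ∩ ℤ^n)|(r^i)^⊥` in the half-open parallelepiped
spanned by the projected generators. -/
theorem stmt_5 {n k : ℕ} (r : Fin k → (Fin n → ℝ))
    (hint : ∀ i, IsIntegral (r i)) (hli : LinearIndependent ℝ r) (i : Fin k) :
    projPerp (r i) '' par r
      = parL (projPerp (r i) '' latticeOf r)
          (fun j : {j : Fin k // j ≠ i} => projPerp (r i) (r (j : Fin k))) := by
  classical
  have hv : r i ≠ 0 := hli.ne_zero i
  have hpvi : projPerp (r i) (r i) = 0 := projPerp_self hv
  ext y
  constructor
  · rintro ⟨x, ⟨⟨lam, hlam, hxeq⟩, hxint⟩, rfl⟩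
    constructor
    · refine ⟨fun j => lam (j : Fin k), fun j => hlam (j : Fin k), ?_⟩
      rw [hxeq, projPerp_sum_smul, ← Finset.sum_erase_add _ _ (Finset.mem_univ i), hpvi,
        smul_zero, add_zero, ← sum_subtype_ne i (fun j => lam j • projPerp (r i) (r j))]
    · exact ⟨x, ⟨by
        rw [hxeq]
        exact Submodule.sum_mem _ fun j _ =>
          Submodule.smul_mem _ _ (Submodule.subset_span ⟨j, rfl⟩), hxint⟩, rfl⟩
  · rintro ⟨⟨lam, hlam, hyeq⟩, z, ⟨hzspan, hzint⟩, hzproj⟩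
    obtain ⟨mu, hmu⟩ := (Submodule.mem_span_range_iff_exists_fun ℝ).mp hzspan
    set lamext : Fin k → ℝ := fun j => if h : j = i then mu i else lam ⟨j, h⟩ with hlamext
    have hsum_ext : ∑ j, lamext j • projPerp (r i) (r j) = y := by
      rw [← Finset.sum_erase_add _ _ (Finset.mem_univ i), hpvi, smul_zero, add_zero, hyeq,
        ← sum_subtype_ne i (fun j => lamext j • projPerp (r i) (r j))]
      refine Finset.sum_congr rfl fun j _ => ?_
      have hc : lamext (j : Fin k) = lam j := by
        simp only [hlamext, dif_neg j.prop]
      rw [hc]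
    have hmuy : ∑ j, mu j • projPerp (r i) (r j) = y := by
      rw [← projPerp_sum_smul, hmu, hzproj]
    have h0 : projPerp (r i) (∑ j, (mu j - lamext j) • r j) = 0 := by
      rw [projPerp_sum_smul]
      have : ∑ j, (mu j - lamext j) • projPerp (r i) (r j)
          = (∑ j, mu j • projPerp (r i) (r j)) - ∑ j, lamext j • projPerp (r i) (r j) := by
        simp [sub_smul, Finset.sum_sub_distrib]
      rw [this, hmuy, hsum_ext, sub_self]
    obtain ⟨t, ht⟩ := projPerp_kernel h0
    have hzero : ∑ j, ((mu j - lamext j) - if j = i then t else 0) • r j = 0 := by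
      have ht' : (∑ x, mu x • r x) - ∑ x, lamext x • r x = t • r i := by
        rw [← Finset.sum_sub_distrib]
        simpa [sub_smul] using ht
      simp only [sub_smul, ite_smul, zero_smul, Finset.sum_sub_distrib,
        Fintype.sum_ite_eq']
      rw [ht', sub_self]
    have hall := Fintype.linearIndependent_iff.mp hli _ hzero
    have hkey : ∀ (j : Fin k) (h : j ≠ i), mu j = lam ⟨j, h⟩ := by
      intro j h
      have h1 := hall j
      simp only [if_neg h, sub_zero, sub_eq_zero] at h1
      rw [h1]
      simp only [hlamext, dif_neg h]
    set m : ℤ := ⌊mu i⌋ with hm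
    set c : Fin k → ℝ := fun j => if j = i then mu i - (m : ℝ) else mu j with hc
    have hxrep : ∑ j, c j • r j = z - (m : ℝ) • r i := by
      have hterm : ∀ j, c j • r j = mu j • r j - (if j = i then (m : ℝ) else 0) • r j := by
        intro j; by_cases h : j = i <;> simp [hc, h, sub_smul]
      rw [Finset.sum_congr rfl fun j _ => hterm j, Finset.sum_sub_distrib, hmu]
      simp only [ite_smul, zero_smul]
      rw [Fintype.sum_ite_eq' i (fun j => (m : ℝ) • r j)]
    refine ⟨z - (m : ℝ) • r i, ⟨⟨c, ?_, hxrep.symm⟩, ?_⟩, ?_⟩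
    · intro j
      by_cases h : j = i
      · subst h
        simp only [hc, if_pos rfl]
        constructor
        · exact sub_nonneg.2 (Int.floor_le _)
        · have := Int.lt_floor_add_one (mu j)
          linarith
      · have hmul := hkey j h
        simp only [hc, if_neg h, hmul]
        exact hlam ⟨j, h⟩
    · intro coord
      obtain ⟨a, ha⟩ := hzint coord
      obtain ⟨b, hb⟩ := hint i coord
      refine ⟨a - m * b, ?_⟩
      simp only [Pi.sub_apply, Pi.smul_apply, smul_eq_mul, ha, hb]
      push_cast
      ring
    · have hsub : projPerp (r i) (z - (m : ℝ) • r i)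
          = projPerp (r i) z - (m : ℝ) • projPerp (r i) (r i) := by
        have := (projPerpLM (r i)).map_sub z ((m : ℝ) • r i)
        simpa [map_smul] using this
      rw [hsub, hpvi, smul_zero, sub_zero, hzproj]

end ICRPaper
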